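/- Let H₀ ⊴ G₀ with cyclic quotient K₀, let A ≥ 1, and let H ⊆ G₀^A be the kernel of the map (g₁,…,g_A) ↦ π₀(g₁)⋯π₀(g_A) to K₀. Suppose an irreducible character θ of H is fixed by the cyclic shift σ of coordinates. For any irreducible character η = (η₁,…,η_A) of G₀^A lying over θ, if η restricted to H is σ-invariant, then there exist an irreducible character η₀ of G₀ and a character ξ of K₀ with ξ^A·η₀ = η₀ such that η_j = ξ^{j−1}·η₀ for 1 ≤ j ≤ A. -/

import Mathlib

open scoped Classical

noncomputable section

section TwistAux
open CategoryTheory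

variable {G : Type} [Group G]

/-- The representation `g ↦ χ g • V.ρ g` twisted by a linear character `χ`. -/
def twistRep (χ : G →* ℂˣ) (V : FDRep ℂ G) : Representation ℂ G V where
  toFun g := (χ g : ℂ) • V.ρ g
  map_one' := by simp
  map_mul' g h := by
    ext v
    simp only [map_mul, Units.val_mul, LinearMap.smul_apply, Module.End.mul_apply,
      map_smul, smul_smul, Module.End.mul_apply, mul_comm]

/-- The twist of `V` by the linear character `χ`, on the same underlying space. -/
def twistObj (χ : G →* ℂˣ) (V : FDRep ℂ G) : FDRep ℂ G :=
  ⟨V.V, (MulEquiv.toMonoidHom (MulEquiv.symm InducedCategory.endEquiv)).comp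
    ((ModuleCat.endRingEquiv V.V.obj).symm.toMonoidHom.comp (twistRep χ V))⟩

lemma twistObj_ρ (χ : G →* ℂˣ) (V : FDRep ℂ G) (g : G) :
    (twistObj χ V).ρ g = (χ g : ℂ) • V.ρ g := rfl

lemma twistObj_character (χ : G →* ℂˣ) (V : FDRep ℂ G) (g : G) :
    (twistObj χ V).character g = (χ g : ℂ) * V.character g := by
  show LinearMap.trace ℂ _ ((χ g : ℂ) • V.ρ g) = _
  rw [map_smul, FDRep.character, smul_eq_mul]

open CategoryTheory

lemma twist_comm (χ : G →* ℂˣ) {X Y : FDRep ℂ G} (f : X ⟶ Y) (g : G) :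
    Action.ρ (twistObj χ X) g ≫ f.hom = f.hom ≫ Action.ρ (twistObj χ Y) g := by
  show ((χ g : ℂ) • (Action.ρ X g : X.V ⟶ X.V)) ≫ f.hom = f.hom ≫ ((χ g : ℂ) • (Action.ρ Y g : Y.V ⟶ Y.V))
  rw [Linear.smul_comp, Linear.comp_smul]
  exact congrArg (fun t => (χ g : ℂ) • t) (f.comm g)

/-- Twisting as a functor (identity on underlying linear maps). -/
def twistFunctor (χ : G →* ℂˣ) : FDRep ℂ G ⥤ FDRep ℂ G where
  obj := twistObj χ
  map {X Y} f := { hom := f.hom, comm := fun g => twist_comm χ f g }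
  map_id X := rfl
  map_comp f g := rfl

/-- Iso `twistObj χ (twistObj ψ V) ≅ V` when `χ * ψ = 1` pointwise. -/
def twistTwistIso (χ ψ : G →* ℂˣ) (h : ∀ g, (χ g : ℂ) * (ψ g : ℂ) = 1) (V : FDRep ℂ G) :
    twistObj χ (twistObj ψ V) ≅ V :=
  Action.mkIso (Iso.refl _) (fun g => by
    show ((χ g : ℂ) • ((ψ g : ℂ) • (Action.ρ V g : V.V ⟶ V.V))) ≫ 𝟙 V.V = 𝟙 V.V ≫ (Action.ρ V g : V.V ⟶ V.V)
    rw [Category.comp_id, Category.id_comp, smul_smul, h g, one_smul])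

/-- Iso `twistObj χ V ≅ V` for trivial `χ`. -/
def twistIsoSelf (χ : G →* ℂˣ) (V : FDRep ℂ G) (h : ∀ g, (χ g : ℂ) = 1) :
    twistObj χ V ≅ V :=
  Action.mkIso (Iso.refl _) (fun g => by
    show ((χ g : ℂ) • (Action.ρ V g : V.V ⟶ V.V)) ≫ 𝟙 V.V = 𝟙 V.V ≫ (Action.ρ V g : V.V ⟶ V.V)
    rw [Category.comp_id, Category.id_comp, h g, one_smul])

instance twistFunctor_additive (χ : G →* ℂˣ) : (twistFunctor χ).Additive where
  map_add := rfl

theorem simple_of_equivalence {C D : Type*} [Category C] [Category D]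
    [Preadditive C] [Preadditive D] (e : C ≌ D) [e.functor.Additive] [e.inverse.Additive]
    (X : C) [Simple X] : Simple (e.functor.obj X) := by
  constructor
  intro Y f m
  haveI : Functor.PreservesMonomorphisms e.inverse :=
    Functor.preservesMonomorphisms_of_adjunction e.toAdjunction
  set i : e.inverse.obj (e.functor.obj X) ≅ X := (e.unitIso.app X).symm with hi
  set f' : e.inverse.obj Y ⟶ X := e.inverse.map f ≫ i.hom with hf'
  haveI : Mono (e.inverse.map f) := e.inverse.map_mono f
  haveI : Mono f' := mono_comp _ _
  have hzero : f' = 0 ↔ f = 0 := by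
    constructor
    · intro h
      have h2 : e.inverse.map f = 0 := by
        have h3 := congrArg (fun t => t ≫ i.inv) h
        simpa [hf', Category.assoc] using h3
      have h4 : e.inverse.map f = e.inverse.map 0 := by
        rw [h2, Functor.map_zero]
      exact e.inverse.map_injective h4
    · rintro rfl
      rw [hf', Functor.map_zero, Limits.zero_comp]
  have hiso : IsIso f' ↔ IsIso f := by
    constructor
    · intro h
      have h2 : e.inverse.map f = f' ≫ i.inv := by simp [hf']
      haveI : IsIso (e.inverse.map f) := by rw [h2]; infer_instance
      exact isIso_of_fully_faithful e.inverse f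
    · intro h
      haveI : IsIso (e.inverse.map f) := inferInstance
      rw [hf']
      infer_instance
  rw [← hiso, Simple.mono_isIso_iff_nonzero f']
  exact not_congr hzero

/-- Twisting is an equivalence of categories. -/
def twistEquiv (χ : G →* ℂˣ) : FDRep ℂ G ≌ FDRep ℂ G :=
  CategoryTheory.Equivalence.mk (twistFunctor χ) (twistFunctor χ⁻¹)
    (NatIso.ofComponents
      (fun V => (twistTwistIso χ⁻¹ χ (fun g => by simp) V).symm)
      (fun {X Y} f => by
        apply Action.hom_ext
        show f.hom ≫ 𝟙 _ = 𝟙 _ ≫ f.hom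
        rw [Category.comp_id, Category.id_comp]))
    (NatIso.ofComponents
      (fun V => twistTwistIso χ χ⁻¹ (fun g => by simp) V)
      (fun {X Y} f => by
        apply Action.hom_ext
        show f.hom ≫ 𝟙 _ = 𝟙 _ ≫ f.hom
        rw [Category.comp_id, Category.id_comp]))

instance simple_twist (χ : G →* ℂˣ) (V : FDRep ℂ G) [Simple V] : Simple (twistObj χ V) := by
  haveI : (twistEquiv χ).functor.Additive := twistFunctor_additive χ
  haveI : (twistEquiv χ).inverse.Additive := twistFunctor_additive χ⁻¹
  exact simple_of_equivalence (twistEquiv χ) V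

/-- Orthogonality of irreducible characters, summed form. -/
lemma char_sum_eq {G : Type} [Group G] [Fintype G] (V W : FDRep ℂ G)
    [Simple V] [Simple W] :
    ∑ g : G, V.character g * W.character g⁻¹ =
      if Nonempty (V ≅ W) then (Fintype.card G : ℂ) else 0 := by
  have hne : (Nat.card G : ℂ) ≠ 0 := Nat.cast_ne_zero.mpr Nat.card_pos.ne'
  haveI : Invertible (Nat.card G : ℂ) := invertibleOfNonzero hne
  have h := FDRep.char_orthonormal (k := ℂ) (G := G) V W
  rw [inv_mul_eq_iff_eq_mul₀ hne] at h
  rw [h, Nat.card_eq_fintype_card]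
  split <;> simp

end TwistAux

section DualAux

variable {K : Type} [CommGroup K] [Fintype K]

lemma hasEnough : HasEnoughRootsOfUnity ℂ (Monoid.exponent K) := by
  haveI : NeZero ((Monoid.exponent K : ℂ)) :=
    ⟨Nat.cast_ne_zero.mpr Monoid.exponent_ne_zero_of_finite⟩
  infer_instance

lemma dual_finite : Finite (K →* ℂˣ) := by
  haveI := @hasEnough K _ _
  exact Finite.of_equiv K
    (CommGroup.monoidHom_mulEquiv_of_hasEnoughRootsOfUnity K ℂ).some.symm.toEquiv

lemma dual_sum_eq [Fintype (K →* ℂˣ)] (k : K) :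
    ∑ ξ : K →* ℂˣ, (ξ k : ℂ) = if k = 1 then (Fintype.card (K →* ℂˣ) : ℂ) else 0 := by
  haveI := @hasEnough K _ _
  split
  · next h =>
    subst h
    simp [Finset.card_univ]
  · next h =>
    obtain ⟨ξ₀, hξ₀⟩ := CommGroup.exists_apply_ne_one_of_hasEnoughRootsOfUnity K ℂ h
    have key : (ξ₀ k : ℂ) * ∑ ξ : K →* ℂˣ, (ξ k : ℂ) = ∑ ξ : K →* ℂˣ, (ξ k : ℂ) := by
      rw [Finset.mul_sum]
      exact Fintype.sum_equiv (Equiv.mulLeft ξ₀) _ _ (fun ξ => by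
        simp [Units.val_mul])
    have h1 : ((ξ₀ k : ℂ) - 1) * ∑ ξ : K →* ℂˣ, (ξ k : ℂ) = 0 := by
      rw [sub_mul, one_mul, key, sub_self]
    rcases mul_eq_zero.mp h1 with h2 | h2
    · exfalso
      apply hξ₀
      ext
      simpa using sub_eq_zero.mp h2
    · exact h2

end DualAux

def IsIrredChar (G : Type) [Group G] (χ : G → ℂ) : Prop :=
  ∃ V : FDRep ℂ G, CategoryTheory.Simple V ∧ ∀ g : G, χ g = V.character g

/-- The homomorphism `G₀^A → K₀`, `(g₁,…,g_A) ↦ π₀(g₁)⋯π₀(g_A)`. -/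
def prodProj {G₀ K₀ : Type} [Group G₀] [CommGroup K₀] (A : ℕ) (π₀ : G₀ →* K₀) :
    (Fin A → G₀) →* K₀ where
  toFun g := ∏ i, π₀ (g i)
  map_one' := by simp
  map_mul' x y := by simp [Finset.prod_mul_distrib]

/-- σ-invariant irreducible characters of `H = ker(G₀^A → K₀)` come from twisted
diagonal characters: if `η = (η₁,…,η_A)` lies over `θ` and `η|_H` is invariant under the
cyclic shift `σ`, then `η_j = ξ^{j−1}·η₀` for some irreducible `η₀` of `G₀` and some
character `ξ` of `K₀` with `ξ^A·η₀ = η₀`. -/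
theorem shift_invariant_characters {G₀ K₀ : Type} [Group G₀] [Fintype G₀]
    [CommGroup K₀] [Fintype K₀] (hcyc : IsCyclic K₀)
    (π₀ : G₀ →* K₀) (hsurj : Function.Surjective π₀)
    (A : ℕ) [NeZero A]
    (θ : ↥(prodProj A π₀).ker → ℂ) (hθ : IsIrredChar _ θ)
    (hθσ : ∀ h : ↥(prodProj A π₀).ker,
      θ h = θ ⟨fun i => (h : Fin A → G₀) (i + 1), by
        have h2 := h.2
        simp only [MonoidHom.mem_ker, prodProj, MonoidHom.coe_mk, OneHom.coe_mk] at h2 ⊢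
        rw [← h2]
        exact Fintype.prod_equiv (Equiv.addRight (1 : Fin A)) _ _ (fun i => rfl)⟩)
    (η : Fin A → G₀ → ℂ) (hη : ∀ i, IsIrredChar G₀ (η i))
    (hover : ∑ h : ↥(prodProj A π₀).ker,
        (∏ i, η i ((h : Fin A → G₀) i)) * (starRingEnd ℂ) (θ h) ≠ 0)
    (hinv : ∀ h : ↥(prodProj A π₀).ker,
        (∏ i, η i ((h : Fin A → G₀) i)) = ∏ i, η i ((h : Fin A → G₀) (i + 1))) :
    ∃ (η₀ : G₀ → ℂ) (ξ : K₀ →* ℂ), IsIrredChar G₀ η₀ ∧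
      (∀ g : G₀, ξ (π₀ g) ^ A * η₀ g = η₀ g) ∧
      (∀ (j : Fin A) (g : G₀), η j g = ξ (π₀ g) ^ (j : ℕ) * η₀ g) := by
  classical
  haveI : Finite (K₀ →* ℂˣ) := dual_finite
  letI : Fintype (K₀ →* ℂˣ) := Fintype.ofFinite _
  choose V hVs hVc using hη
  haveI : ∀ i, CategoryTheory.Simple (V i) := hVs
  set Hk := (prodProj A π₀).ker with hHk
  -- the two families of coefficient sums
  set c : (K₀ →* ℂˣ) → Fin A → ℂ :=
    fun ξ i => ∑ g : G₀, (ξ (π₀ g) : ℂ) * η i g * η (i - 1) g⁻¹ with hc_def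
  set d : (K₀ →* ℂˣ) → Fin A → ℂ :=
    fun ξ i => ∑ g : G₀, (ξ (π₀ g) : ℂ) * η i g * η i g⁻¹ with hd_def
  -- factorization identities
  have fact : ∀ (φ : Fin A → G₀ → ℂ) (ξ : K₀ →* ℂˣ),
      ∑ g : Fin A → G₀, (ξ (prodProj A π₀ g) : ℂ) * ∏ i, φ i (g i)
        = ∏ i, ∑ x : G₀, (ξ (π₀ x) : ℂ) * φ i x := by
    intro φ ξ
    rw [← Finset.sum_prod_piFinset Finset.univ (fun i x => (ξ (π₀ x) : ℂ) * φ i x),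
      Fintype.piFinset_univ]
    refine Finset.sum_congr rfl (fun g _ => ?_)
    rw [Finset.prod_mul_distrib]
    congr 1
    show ((ξ (∏ i, π₀ (g i)) : ℂ)) = _
    rw [map_prod]
    push_cast
    rfl
  -- indicator identity
  have indicator : ∀ F : (Fin A → G₀) → ℂ,
      ∑ ξ : K₀ →* ℂˣ, ∑ g : Fin A → G₀, (ξ (prodProj A π₀ g) : ℂ) * F g
        = (Fintype.card (K₀ →* ℂˣ) : ℂ) * ∑ h : ↥Hk, F ↑h := by
    intro F
    rw [Finset.sum_comm]
    have step1 : ∀ g : Fin A → G₀,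
        ∑ ξ : K₀ →* ℂˣ, (ξ (prodProj A π₀ g) : ℂ) * F g
          = (if g ∈ Hk then (Fintype.card (K₀ →* ℂˣ) : ℂ) * F g else 0) := by
      intro g
      rw [← Finset.sum_mul, dual_sum_eq]
      by_cases h : g ∈ Hk
      · rw [if_pos h, if_pos (by simpa [hHk, MonoidHom.mem_ker] using h)]
      · rw [if_neg h, if_neg (by simpa [hHk, MonoidHom.mem_ker] using h), zero_mul]
    rw [Finset.sum_congr rfl (fun g _ => step1 g), ← Finset.sum_filter,
      Finset.sum_subtype (p := (· ∈ Hk)) (Finset.univ.filter (· ∈ Hk))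
        (by intro x; simp) (fun g => (Fintype.card (K₀ →* ℂˣ) : ℂ) * F g),
      ← Finset.mul_sum]
  -- F agrees with the untwisted version on the kernel
  have stepA : ∀ h : ↥Hk,
      (∏ i, η i ((h : Fin A → G₀) i) * η (i - 1) (((h : Fin A → G₀) i)⁻¹))
        = ∏ i, η i ((h : Fin A → G₀) i) * η i (((h : Fin A → G₀) i)⁻¹) := by
    intro h
    rw [Finset.prod_mul_distrib, Finset.prod_mul_distrib]
    congr 1
    have e1 : ∏ i, η (i - 1) (((h : Fin A → G₀) i)⁻¹)
        = ∏ i, η i (((h : Fin A → G₀) (i + 1))⁻¹) :=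
      (Fintype.prod_equiv (Equiv.addRight (1 : Fin A))
        (fun i => η i (((h : Fin A → G₀) (i + 1))⁻¹))
        (fun i => η (i - 1) (((h : Fin A → G₀) i)⁻¹))
        (fun i => by simp)).symm
    have e2 := hinv h⁻¹
    have hcoe : ∀ j : Fin A, ((h⁻¹ : ↥Hk) : Fin A → G₀) j = (((h : Fin A → G₀)) j)⁻¹ := by
      intro j; rfl
    simp only [hcoe] at e2
    rw [e1, ← e2]
  -- orthogonality values
  have hd_val : ∀ (ξ : K₀ →* ℂˣ) (i : Fin A),
      d ξ i = if Nonempty (twistObj (ξ.comp π₀) (V i) ≅ V i)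
        then (Fintype.card G₀ : ℂ) else 0 := by
    intro ξ i
    rw [hd_def, ← char_sum_eq (twistObj (ξ.comp π₀) (V i)) (V i)]
    refine Finset.sum_congr rfl (fun g _ => ?_)
    rw [twistObj_character, ← hVc, ← hVc]
    rfl
  have hc_val : ∀ (ξ : K₀ →* ℂˣ) (i : Fin A),
      c ξ i = if Nonempty (twistObj (ξ.comp π₀) (V i) ≅ V (i - 1))
        then (Fintype.card G₀ : ℂ) else 0 := by
    intro ξ i
    rw [hc_def, ← char_sum_eq (twistObj (ξ.comp π₀) (V i)) (V (i - 1))]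
    refine Finset.sum_congr rfl (fun g _ => ?_)
    rw [twistObj_character, ← hVc, ← hVc]
    rfl
  -- the two total sums agree
  have T1 : ∑ ξ : K₀ →* ℂˣ, ∏ i, c ξ i = ∑ ξ : K₀ →* ℂˣ, ∏ i, d ξ i := by
    have l1 : ∑ ξ : K₀ →* ℂˣ, ∏ i, c ξ i
        = (Fintype.card (K₀ →* ℂˣ) : ℂ) * ∑ h : ↥Hk,
            ∏ i, η i ((h : Fin A → G₀) i) * η (i - 1) (((h : Fin A → G₀) i)⁻¹) := by
      rw [← indicator (fun g => ∏ i, η i (g i) * η (i - 1) ((g i)⁻¹))]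
      refine Finset.sum_congr rfl (fun ξ _ => ?_)
      rw [fact (fun i x => η i x * η (i - 1) x⁻¹) ξ]
      exact Finset.prod_congr rfl (fun i _ => Finset.sum_congr rfl (fun x _ => by ring))
    have l2 : ∑ ξ : K₀ →* ℂˣ, ∏ i, d ξ i
        = (Fintype.card (K₀ →* ℂˣ) : ℂ) * ∑ h : ↥Hk,
            ∏ i, η i ((h : Fin A → G₀) i) * η i (((h : Fin A → G₀) i)⁻¹) := by
      rw [← indicator (fun g => ∏ i, η i (g i) * η i ((g i)⁻¹))]
      refine Finset.sum_congr rfl (fun ξ _ => ?_)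
      rw [fact (fun i x => η i x * η i x⁻¹) ξ]
      exact Finset.prod_congr rfl (fun i _ => Finset.sum_congr rfl (fun x _ => by ring))
    rw [l1, l2]
    congr 1
    exact Finset.sum_congr rfl (fun h _ => stepA h)
  -- the untwisted sum is nonzero
  have hP : ((Fintype.card G₀ : ℂ)) ^ A ≠ 0 :=
    pow_ne_zero _ (Nat.cast_ne_zero.mpr Fintype.card_ne_zero)
  have hterm : ∀ ξ : K₀ →* ℂˣ, ∏ i, d ξ i = (Fintype.card G₀ : ℂ) ^ A ∨ ∏ i, d ξ i = 0 := by
    intro ξ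
    by_cases hall : ∀ i : Fin A, Nonempty (twistObj (ξ.comp π₀) (V i) ≅ V i)
    · left
      rw [Finset.prod_congr rfl (fun i _ => by rw [hd_val ξ i, if_pos (hall i)]),
        Finset.prod_const, Finset.card_univ, Fintype.card_fin]
    · right
      push_neg at hall
      obtain ⟨i, hi⟩ := hall
      exact Finset.prod_eq_zero (Finset.mem_univ i) (by rw [hd_val ξ i, if_neg (not_nonempty_iff.mpr hi)])
  have hone : ∏ i, d (1 : K₀ →* ℂˣ) i = (Fintype.card G₀ : ℂ) ^ A := by
    rw [Finset.prod_congr rfl (fun i _ => by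
        rw [hd_val 1 i, if_pos ⟨twistIsoSelf _ (V i) (fun g => rfl)⟩]),
      Finset.prod_const, Finset.card_univ, Fintype.card_fin]
  have hdsum_ne : ∑ ξ : K₀ →* ℂˣ, ∏ i, d ξ i ≠ 0 := by
    have heq : ∑ ξ : K₀ →* ℂˣ, ∏ i, d ξ i
        = ∑ ξ : K₀ →* ℂˣ, (if ∏ i, d ξ i = (Fintype.card G₀ : ℂ) ^ A
            then (Fintype.card G₀ : ℂ) ^ A else 0) := by
      refine Finset.sum_congr rfl (fun ξ _ => ?_)
      rcases hterm ξ with h | h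
      · rw [h, if_pos rfl]
      · rw [h, if_neg (fun h0 => hP h0.symm)]
    rw [heq, ← Finset.sum_filter]
    rw [Finset.sum_const]
    have hmem : (1 : K₀ →* ℂˣ) ∈ Finset.univ.filter
        (fun ξ => ∏ i, d ξ i = (Fintype.card G₀ : ℂ) ^ A) := by
      simp [hone]
    intro hcon
    rw [nsmul_eq_mul, mul_eq_zero] at hcon
    rcases hcon with h | h
    · exact Finset.card_ne_zero_of_mem hmem (by exact_mod_cast h)
    · exact hP h
  -- extract the character ξ
  have hcsum_ne : ∑ ξ : K₀ →* ℂˣ, ∏ i, c ξ i ≠ 0 := by rw [T1]; exact hdsum_ne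
  obtain ⟨ξ, -, hξ⟩ := Finset.exists_ne_zero_of_sum_ne_zero hcsum_ne
  have hci : ∀ i : Fin A, c ξ i ≠ 0 := by
    intro i hzero
    exact hξ (Finset.prod_eq_zero (Finset.mem_univ i) hzero)
  have key : ∀ (i : Fin A) (g : G₀), (ξ (π₀ g) : ℂ) * η i g = η (i - 1) g := by
    intro i g
    have h1 := hci i
    rw [hc_val ξ i] at h1
    have h2 : Nonempty (twistObj (ξ.comp π₀) (V i) ≅ V (i - 1)) := by
      by_contra hcon
      exact h1 (if_neg hcon)
    obtain ⟨iso⟩ := h2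
    have h3 := congrFun (FDRep.char_iso iso) g
    rw [twistObj_character, ← hVc, ← hVc] at h3
    exact h3
  -- assemble the answer
  set ζ : K₀ →* ℂ := (Units.coeHom ℂ).comp (ξ⁻¹ : K₀ →* ℂˣ) with hζdef
  have hζ_apply : ∀ k : K₀, ζ k = (((ξ k)⁻¹ : ℂˣ) : ℂ) := fun k => rfl
  have hstep : ∀ (i : Fin A) (g : G₀), η i g = ζ (π₀ g) * η (i - 1) g := by
    intro i g
    rw [← key i g, hζ_apply, ← mul_assoc, ← Units.val_mul, inv_mul_cancel,
      Units.val_one, one_mul]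
  open Fin.NatCast in
  have hnat : ∀ (n : ℕ) (g : G₀), η ((n : Fin A)) g = ζ (π₀ g) ^ n * η 0 g := by
    intro n
    induction n with
    | zero => intro g; rw [Nat.cast_zero, pow_zero, one_mul]
    | succ n ih =>
      intro g
      have h1 : ((n + 1 : ℕ) : Fin A) = ((n : ℕ) : Fin A) + 1 := by push_cast; ring
      rw [h1, hstep (((n : ℕ) : Fin A) + 1) g, add_sub_cancel_right, ih g, pow_succ]
      ring
  open Fin.NatCast in
  refine ⟨η 0, ζ, ⟨V 0, hVs 0, hVc 0⟩, ?_, ?_⟩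
  · intro g
    have h := hnat A g
    rw [Fin.natCast_self] at h
    exact h.symm
  · intro j g
    have h := hnat (j : ℕ) g
    rwa [Fin.cast_val_eq_self] at h
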